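/- The identity σ(τ) := T̂_A(τ) − T̂_B(τ) = (3−τ)√((8τ²−9/2)² − 45/4)/(18−9τ²) holds, and σ is monotonically increasing on [√(9+3√5)/4, 1], with σ(√(9+3√5)/4) = 0 and σ(1) = 2/9; in particular σ(0.991) > 0.02. -/
import Mathlib


noncomputable def hatTA (τ : ℝ) : ℝ :=
  ((3 - τ) / 2) *
    (((27 - 8 * τ ^ 2) + Real.sqrt ((8 * τ ^ 2 - 9 / 2) ^ 2 - 45 / 4)) /
      (18 - 9 * τ ^ 2))

noncomputable def hatTB (τ : ℝ) : ℝ :=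
  ((3 - τ) / 2) *
    (((27 - 8 * τ ^ 2) - Real.sqrt ((8 * τ ^ 2 - 9 / 2) ^ 2 - 45 / 4)) /
      (18 - 9 * τ ^ 2))

noncomputable def σ (τ : ℝ) : ℝ := hatTA τ - hatTB τ

lemma sigma_eq (τ : ℝ) :
    σ τ = (3 - τ) * Real.sqrt ((8 * τ ^ 2 - 9 / 2) ^ 2 - 45 / 4) /
      (18 - 9 * τ ^ 2) := by
  unfold σ hatTA hatTB
  ring

set_option maxHeartbeats 1000000 in
/-- `σ(τ) = (3−τ)√((8τ²−9/2)²−45/4)/(18−9τ²)`, `σ` is monotonically increasing on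
`[√(9+3√5)/4, 1]`, `σ(√(9+3√5)/4) = 0`, `σ(1) = 2/9`, and `σ(0.991) > 0.02`. -/
theorem stmt_19 :
    (∀ τ : ℝ, Real.sqrt (9 + 3 * Real.sqrt 5) / 4 ≤ τ → τ ≤ 1 →
      σ τ = (3 - τ) * Real.sqrt ((8 * τ ^ 2 - 9 / 2) ^ 2 - 45 / 4) /
        (18 - 9 * τ ^ 2)) ∧
    MonotoneOn σ (Set.Icc (Real.sqrt (9 + 3 * Real.sqrt 5) / 4) 1) ∧
    σ (Real.sqrt (9 + 3 * Real.sqrt 5) / 4) = 0 ∧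
    σ 1 = 2 / 9 ∧
    σ 0.991 > 0.02 := by
  have h5lo : (2.227 : ℝ) ≤ Real.sqrt 5 := by
    rw [Real.le_sqrt (by norm_num) (by norm_num)]; norm_num
  have h5hi : Real.sqrt 5 ≤ 2.2375 := by
    rw [Real.sqrt_le_left (by norm_num)]; norm_num
  have h5sq : Real.sqrt 5 ^ 2 = 5 := Real.sq_sqrt (by norm_num)
  obtain ⟨t0, ht0def⟩ : ∃ t : ℝ, Real.sqrt (9 + 3 * Real.sqrt 5) / 4 = t := ⟨_, rfl⟩
  rw [ht0def]
  have h9nn : (0 : ℝ) ≤ 9 + 3 * Real.sqrt 5 := by positivity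
  have ht0sq : t0 ^ 2 = (9 + 3 * Real.sqrt 5) / 16 := by
    rw [← ht0def, div_pow, Real.sq_sqrt h9nn]; norm_num
  have ht0lo : (0.99 : ℝ) ≤ t0 := by
    rw [← ht0def, le_div_iff₀ (by norm_num)]
    rw [show (0.99 : ℝ) * 4 = 3.96 by norm_num,
      Real.le_sqrt (by norm_num) h9nn]
    nlinarith
  have ht0hi : t0 ≤ 0.991 := by
    rw [← ht0def, div_le_iff₀ (by norm_num)]
    rw [Real.sqrt_le_left (by norm_num)]
    nlinarith
  have ht0le1 : t0 ≤ 1 := ht0hi.trans (by norm_num)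
  refine ⟨fun τ _ _ => sigma_eq τ, ?_, ?_, ?_, ?_⟩
  · -- monotonicity
    rintro a ⟨ha1, ha2⟩ b ⟨hb1, hb2⟩ hab
    have ha99 : (0.99 : ℝ) ≤ a := ht0lo.trans ha1
    have hb99 : (0.99 : ℝ) ≤ b := ht0lo.trans hb1
    rw [sigma_eq a, sigma_eq b]
    have hDa : (0 : ℝ) < 18 - 9 * a ^ 2 := by nlinarith
    have hDb : (0 : ℝ) < 18 - 9 * b ^ 2 := by nlinarith
    have hs : Real.sqrt ((8 * a ^ 2 - 9 / 2) ^ 2 - 45 / 4) ≤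
        Real.sqrt ((8 * b ^ 2 - 9 / 2) ^ 2 - 45 / 4) := by
      apply Real.sqrt_le_sqrt
      nlinarith [mul_nonneg (mul_nonneg (sub_nonneg.2 hab)
        (show (0:ℝ) ≤ a + b by nlinarith))
        (show (0:ℝ) ≤ 8 * a ^ 2 + 8 * b ^ 2 - 9 by nlinarith)]
    have key : (3 - a) * (18 - 9 * b ^ 2) ≤ (3 - b) * (18 - 9 * a ^ 2) := by
      nlinarith [mul_nonneg (sub_nonneg.2 hab)
        (show (0 : ℝ) ≤ 3 * (a + b) - a * b - 2 by nlinarith)]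
    rw [div_le_div_iff₀ hDa hDb]
    calc (3 - a) * Real.sqrt ((8 * a ^ 2 - 9 / 2) ^ 2 - 45 / 4) * (18 - 9 * b ^ 2)
        = Real.sqrt ((8 * a ^ 2 - 9 / 2) ^ 2 - 45 / 4) * ((3 - a) * (18 - 9 * b ^ 2)) := by
          ring
      _ ≤ Real.sqrt ((8 * b ^ 2 - 9 / 2) ^ 2 - 45 / 4) * ((3 - b) * (18 - 9 * a ^ 2)) := by
          apply mul_le_mul hs key (by nlinarith) (Real.sqrt_nonneg _)
      _ = (3 - b) * Real.sqrt ((8 * b ^ 2 - 9 / 2) ^ 2 - 45 / 4) * (18 - 9 * a ^ 2) := by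
          ring
  · -- σ t0 = 0
    rw [sigma_eq t0]
    have h1 : (8 * t0 ^ 2 - 9 / 2) ^ 2 - 45 / 4 = 0 := by
      rw [ht0sq]; nlinarith
    rw [h1, Real.sqrt_zero]
    simp
  · -- σ 1 = 2/9
    rw [sigma_eq 1,
      show (8 * (1:ℝ) ^ 2 - 9 / 2) ^ 2 - 45 / 4 = 1 by norm_num, Real.sqrt_one]
    norm_num
  · -- σ 0.991 > 0.02
    rw [sigma_eq 0.991]
    have hD : (0.1 : ℝ) < Real.sqrt ((8 * (0.991:ℝ) ^ 2 - 9 / 2) ^ 2 - 45 / 4) := by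
      rw [Real.lt_sqrt (by norm_num)]; norm_num
    rw [gt_iff_lt, lt_div_iff₀ (by norm_num)]
    nlinarith
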